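/- If a graph G is obtained from H by adding a path P whose internal vertices are new and whose two endpoints are attached each to one vertex of H (i.e., G is H plus a new path with its two end-edges joining two vertices of H, with the edge between those two H-vertices possibly removed), then lrw(G) ≤ lrw(H) + 2. -/

import Mathlib

open Finset Submodule Module Matrix


/-- Cut-rank of a vertex subset `X`: the GF(2) rank of the submatrix of the
adjacency matrix `A` with rows indexed by `X` and columns by its complement. -/
noncomputable def cutRank {V : Type*} [Fintype V] [DecidableEq V]
    (A : Matrix V V (ZMod 2)) (X : Finset V) : ℕ :=
  (A.submatrix (fun x : {x : V // x ∈ X} => (x : V))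
               (fun y : {y : V // y ∉ X} => (y : V))).rank

/-- The width of a linear ordering (given by a bijection `Fin n ≃ V`):
the maximum cut-rank over all prefixes. -/
noncomputable def orderWidth {V : Type*} [Fintype V] [DecidableEq V]
    (A : Matrix V V (ZMod 2)) (e : Fin (Fintype.card V) ≃ V) : ℕ :=
  Finset.sup (Finset.range (Fintype.card V)) fun i =>
    cutRank A (Finset.univ.filter fun v => ((e.symm v : Fin (Fintype.card V)) : ℕ) < i)

/-- Linear rank-width: the minimum width over all linear orderings. -/
noncomputable def lrw {V : Type*} [Fintype V] [DecidableEq V]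
    (A : Matrix V V (ZMod 2)) : ℕ :=
  ⨅ e : Fin (Fintype.card V) ≃ V, orderWidth A e

/-- The GF(2) adjacency matrix of a simple graph. -/
def adjMat {V : Type*} [Fintype V] [DecidableEq V]
    (G : SimpleGraph V) [DecidableRel G.Adj] : Matrix V V (ZMod 2) :=
  Matrix.of fun u v => if G.Adj u v then 1 else 0

/-- If `G` is obtained from `H` by adding a path of `k` new
vertices, whose first vertex is joined to `x ∈ V(H)` and whose last vertex is
joined to `y ∈ V(H)` (the edge between `x` and `y` possibly removed), then
`lrw(G) ≤ lrw(H) + 2`. -/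
lemma rank_le_finrank_of_cols_mem {m n : Type*} [Fintype m] [Fintype n]
    (M : Matrix m n (ZMod 2)) (p : Submodule (ZMod 2) (m → ZMod 2))
    (h : ∀ j, Mᵀ j ∈ p) : M.rank ≤ Module.finrank (ZMod 2) p := by
  rw [Matrix.rank_eq_finrank_span_cols]
  exact Submodule.finrank_mono (Submodule.span_le.2 (Set.range_subset_iff.2 h))

lemma finrank_span_pair_le {M : Type*} [AddCommGroup M] [Module (ZMod 2) M] (a b : M) :
    Module.finrank (ZMod 2) (Submodule.span (ZMod 2) ({a, b} : Set M)) ≤ 2 := by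
  classical
  refine (finrank_span_le_card _).trans ?_
  rw [Set.toFinset_insert, Set.toFinset_singleton]
  exact (Finset.card_insert_le _ _).trans (by simp)

lemma finrank_sup_le' {W : Type*} [AddCommGroup W] [Module (ZMod 2) W]
    [FiniteDimensional (ZMod 2) W] (s t : Submodule (ZMod 2) W) :
    Module.finrank (ZMod 2) ↥(s ⊔ t) ≤ Module.finrank (ZMod 2) s + Module.finrank (ZMod 2) t := by
  have := Submodule.finrank_sup_add_finrank_inf_eq s t
  omega

lemma cutRank_le_two {W : Type*} [Fintype W] [DecidableEq W]
    (A : Matrix W W (ZMod 2)) (P : Finset W) (a b : W) (hab : a ≠ b)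
    (h : ∀ w ∈ P, ∀ j ∉ P, w ≠ a → w ≠ b → A w j = 0) : cutRank A P ≤ 2 := by
  classical
  set δa : {w : W // w ∈ P} → ZMod 2 := fun w => if (w : W) = a then 1 else 0 with hδa
  set δb : {w : W // w ∈ P} → ZMod 2 := fun w => if (w : W) = b then 1 else 0 with hδb
  have hcols : ∀ j : {y : W // y ∉ P},
      ((A.submatrix (fun x : {x : W // x ∈ P} => (x : W))
        (fun y : {y : W // y ∉ P} => (y : W)))ᵀ j) ∈
        Submodule.span (ZMod 2) ({δa, δb} : Set _) := by
    intro j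
    refine Submodule.mem_span_pair.2 ⟨A a j, A b j, ?_⟩
    funext w
    by_cases hwa : (w : W) = a
    · simp [δa, δb, hwa, hab]
    · by_cases hwb : (w : W) = b
      · simp [δa, δb, hwa, hwb, Ne.symm hab]
      · simp [δa, δb, hwa, hwb, h w w.2 j j.2 hwa hwb]
  exact (rank_le_finrank_of_cols_mem _ _ hcols).trans (finrank_span_pair_le _ _)

lemma aux1 {V : Type*} [Fintype V] [DecidableEq V] {k : ℕ}
    (H : SimpleGraph V) [DecidableRel H.Adj]
    (G : SimpleGraph (V ⊕ Fin k)) [DecidableRel G.Adj]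
    (x y : V) (hxy : x ≠ y)
    (h1 : ∀ u v : V, s(u, v) ≠ s(x, y) →
      (G.Adj (Sum.inl u) (Sum.inl v) ↔ H.Adj u v))
    (h3 : ∀ (u : V) (i : Fin k), G.Adj (Sum.inl u) (Sum.inr i) ↔
      ((u = x ∧ (i : ℕ) = 0) ∨ (u = y ∧ (i : ℕ) = k - 1)))
    (X : Finset V) :
    cutRank (adjMat G) (X.image Sum.inl) ≤ cutRank (adjMat H) X + 2 := by
  classical
  set X' : Finset (V ⊕ Fin k) := X.image Sum.inl with hX'
  -- the row equivalence
  let ε : {u : V // u ∈ X} ≃ {w : V ⊕ Fin k // w ∈ X'} :=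
  { toFun := fun u => ⟨Sum.inl u.1, Finset.mem_image_of_mem _ u.2⟩
    invFun := fun w => ⟨(Finset.mem_image.1 w.2).choose, (Finset.mem_image.1 w.2).choose_spec.1⟩
    left_inv := fun u => Subtype.ext
      (Sum.inl_injective (Finset.mem_image.1 (Finset.mem_image_of_mem Sum.inl u.2)).choose_spec.2)
    right_inv := fun w => Subtype.ext (Finset.mem_image.1 w.2).choose_spec.2 }
  have hε : ∀ w : {w : V ⊕ Fin k // w ∈ X'}, (w : V ⊕ Fin k) = Sum.inl (ε.symm w : V) := by
    intro w
    conv_lhs => rw [← ε.apply_symm_apply w]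
    rfl

  let E : ({u : V // u ∈ X} → ZMod 2) ≃ₗ[ZMod 2] ({w : V ⊕ Fin k // w ∈ X'} → ZMod 2) :=
    LinearEquiv.funCongrLeft (ZMod 2) (ZMod 2) ε.symm
  set Bsub := (adjMat H).submatrix (fun u : {u : V // u ∈ X} => (u : V))
      (fun v : {v : V // v ∉ X} => (v : V)) with hBsub
  set S : Submodule (ZMod 2) ({w : V ⊕ Fin k // w ∈ X'} → ZMod 2) :=
    (Submodule.span (ZMod 2) (Set.range Bsubᵀ)).map (E : _ →ₗ[ZMod 2] _) with hS
  set δx : {w : V ⊕ Fin k // w ∈ X'} → ZMod 2 :=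
    fun w => if (w : V ⊕ Fin k) = Sum.inl x then 1 else 0 with hδx
  set δy : {w : V ⊕ Fin k // w ∈ X'} → ZMod 2 :=
    fun w => if (w : V ⊕ Fin k) = Sum.inl y then 1 else 0 with hδy
  set T := Submodule.span (ZMod 2) ({δx, δy} : Set _) with hT
  have hcols : ∀ j : {w : V ⊕ Fin k // w ∉ X'},
      ((adjMat G).submatrix (fun w : {w : V ⊕ Fin k // w ∈ X'} => (w : V ⊕ Fin k))
        (fun w : {w : V ⊕ Fin k // w ∉ X'} => (w : V ⊕ Fin k)))ᵀ j ∈ S ⊔ T := by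
    intro j
    obtain ⟨jv, hjv⟩ : ∃ jv, (j : V ⊕ Fin k) = jv := ⟨_, rfl⟩
    cases jv with
    | inr i =>
      -- column supported on rows x, y
      refine Submodule.mem_sup_right (Submodule.mem_span_pair.2
        ⟨adjMat G (Sum.inl x) (Sum.inr i), adjMat G (Sum.inl y) (Sum.inr i), ?_⟩)
      funext w
      have hw := hε w
      set u := (ε.symm w : V) with hu
      by_cases hux : u = x
      · simp [δx, δy, hw, hux, hxy, hjv, adjMat, ite_apply]
      · by_cases huy : u = y
        · simp [δx, δy, hw, huy, Ne.symm hxy, hjv, adjMat, ite_apply]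
        · have h0 : ¬ G.Adj (Sum.inl u) (Sum.inr i) := by
            rw [h3]; rintro (⟨h, -⟩ | ⟨h, -⟩) <;> [exact hux h; exact huy h]
          simp [δx, δy, hw, hux, huy, hjv, adjMat, h0, ite_apply]
    | inl v =>
      have hv : v ∉ X := by
        intro hvX
        exact j.2 (hjv ▸ Finset.mem_image_of_mem Sum.inl hvX)
      -- column = E (H-column) + correction supported on x, y
      have hScol : E (Bsubᵀ ⟨v, hv⟩) ∈ S :=
        Submodule.mem_map_of_mem (Submodule.subset_span ⟨⟨v, hv⟩, rfl⟩)
      have hTcol : ((adjMat G).submatrix (fun w : {w : V ⊕ Fin k // w ∈ X'} => (w : V ⊕ Fin k))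
            (fun w : {w : V ⊕ Fin k // w ∉ X'} => (w : V ⊕ Fin k)))ᵀ j
            - E (Bsubᵀ ⟨v, hv⟩) ∈ T := by
        refine Submodule.mem_span_pair.2
          ⟨adjMat G (Sum.inl x) (Sum.inl v) - adjMat H x v,
           adjMat G (Sum.inl y) (Sum.inl v) - adjMat H y v, ?_⟩
        funext w
        have hw := hε w
        set u := (ε.symm w : V) with hu
        have hEval : E (Bsubᵀ ⟨v, hv⟩) w = adjMat H u v := rfl
        by_cases hux : u = x
        · simp [δx, δy, hw, hux, hxy, hjv, hEval]
        · by_cases huy : u = y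
          · simp [δx, δy, hw, huy, Ne.symm hxy, hjv, hEval]
          · have hne : s(u, v) ≠ s(x, y) := by
              intro hs
              rcases Sym2.eq_iff.1 hs with ⟨h, -⟩ | ⟨h, -⟩
              · exact hux h
              · exact huy h
            have : adjMat G (Sum.inl u) (Sum.inl v) = adjMat H u v := by
              simp only [adjMat, Matrix.of_apply]
              exact if_congr (h1 u v hne) rfl rfl
            simp [δx, δy, hw, hux, huy, hjv, hEval, this]
      have := Submodule.add_mem_sup hScol hTcol
      simpa using this
  calc cutRank (adjMat G) X'
      = ((adjMat G).submatrix (fun w : {w : V ⊕ Fin k // w ∈ X'} => (w : V ⊕ Fin k))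
          (fun w : {w : V ⊕ Fin k // w ∉ X'} => (w : V ⊕ Fin k))).rank := rfl
    _ ≤ finrank (ZMod 2) ↥(S ⊔ T) := rank_le_finrank_of_cols_mem _ _ hcols
    _ ≤ finrank (ZMod 2) S + finrank (ZMod 2) T := finrank_sup_le' S T
    _ ≤ cutRank (adjMat H) X + 2 := by
        have hSrank : finrank (ZMod 2) S = cutRank (adjMat H) X := by
          rw [hS, LinearEquiv.finrank_map_eq]
          exact (Matrix.rank_eq_finrank_span_cols Bsub).symm
        have hTrank : finrank (ZMod 2) T ≤ 2 := by
          rw [hT]; exact finrank_span_pair_le δx δy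
        omega

theorem stmt12 {V : Type*} [Fintype V] [DecidableEq V] (k : ℕ) (hk : 1 ≤ k)
    (H : SimpleGraph V) [DecidableRel H.Adj]
    (G : SimpleGraph (V ⊕ Fin k)) [DecidableRel G.Adj]
    (x y : V) (hxy : x ≠ y)
    (h1 : ∀ u v : V, s(u, v) ≠ s(x, y) →
      (G.Adj (Sum.inl u) (Sum.inl v) ↔ H.Adj u v))
    (h2 : ∀ i j : Fin k, G.Adj (Sum.inr i) (Sum.inr j) ↔
      ((i : ℕ) + 1 = (j : ℕ) ∨ (j : ℕ) + 1 = (i : ℕ)))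
    (h3 : ∀ (u : V) (i : Fin k), G.Adj (Sum.inl u) (Sum.inr i) ↔
      ((u = x ∧ (i : ℕ) = 0) ∨ (u = y ∧ (i : ℕ) = k - 1))) :
    lrw (adjMat G) ≤ lrw (adjMat H) + 2 := by
  classical
  set n := Fintype.card V with hn
  have hc : Fintype.card (V ⊕ Fin k) = n + k := by simp [hn]
  obtain ⟨e, he⟩ : ∃ e : Fin (Fintype.card V) ≃ V,
      orderWidth (adjMat H) e = lrw (adjMat H) := by
    have hmem : lrw (adjMat H) ∈ Set.range (fun e : Fin (Fintype.card V) ≃ V =>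
        orderWidth (adjMat H) e) := by
      have : Nonempty (Fin (Fintype.card V) ≃ V) := ⟨(Fintype.equivFin V).symm⟩
      rw [lrw, iInf]
      exact Nat.sInf_mem (Set.range_nonempty _)
    exact hmem
  let e' : Fin (Fintype.card (V ⊕ Fin k)) ≃ (V ⊕ Fin k) :=
    (finCongr hc).trans (finSumFinEquiv.symm.trans (Equiv.sumCongr e (Equiv.refl (Fin k))))
  have hsl : ∀ u : V, ((e'.symm (Sum.inl u) : Fin (Fintype.card (V ⊕ Fin k))) : ℕ)
      = ((e.symm u : Fin n) : ℕ) := by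
    intro u
    simp [e', finSumFinEquiv_apply_left]
  have hsr : ∀ j : Fin k, ((e'.symm (Sum.inr j) : Fin (Fintype.card (V ⊕ Fin k))) : ℕ)
      = n + (j : ℕ) := by
    intro j
    simp [e', finSumFinEquiv_apply_right]
  refine le_trans (ciInf_le (OrderBot.bddBelow _) e') ?_
  rw [orderWidth]
  refine Finset.sup_le ?_
  intro i hi
  rw [Finset.mem_range, hc] at hi
  by_cases hin : i ≤ n
  · -- prefix is a subset of the `inl` part
    have hP : (Finset.univ.filter fun w : V ⊕ Fin k =>
          ((e'.symm w : Fin (Fintype.card (V ⊕ Fin k))) : ℕ) < i)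
        = (Finset.univ.filter fun u : V => ((e.symm u : Fin n) : ℕ) < i).image Sum.inl := by
      ext w
      cases w with
      | inl u => simp [hsl u]
      | inr j =>
        have : ¬ (n + (j : ℕ) < i) := by omega
        simp [hsr j, this]
    rw [hP]
    refine le_trans (aux1 H G x y hxy h1 h3 _) ?_
    by_cases hin' : i < n
    · have hle : cutRank (adjMat H)
          (Finset.univ.filter fun u : V => ((e.symm u : Fin n) : ℕ) < i)
          ≤ orderWidth (adjMat H) e := by
        rw [orderWidth]
        exact Finset.le_sup (f := fun i => cutRank (adjMat H)
          (Finset.univ.filter fun v : V => ((e.symm v : Fin (Fintype.card V)) : ℕ) < i))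
          (Finset.mem_range.2 hin')
      rw [he] at hle
      omega
    · -- i = n : the prefix is all of V, cut-rank of univ is 0
      have hin2 : i = n := by omega
      have huniv : (Finset.univ.filter fun u : V => ((e.symm u : Fin n) : ℕ) < i)
          = (Finset.univ : Finset V) := by
        ext u
        simp [hin2]
        exact (e.symm u).isLt
      rw [huniv]
      have h0 : cutRank (adjMat H) (Finset.univ : Finset V) = 0 := by
        have hcard : Fintype.card {v : V // v ∉ (Finset.univ : Finset V)} = 0 := by
          simp
        have := Matrix.rank_le_card_width ((adjMat H).submatrix
          (fun u : {u : V // u ∈ (Finset.univ : Finset V)} => (u : V))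
          (fun v : {v : V // v ∉ (Finset.univ : Finset V)} => (v : V)))
        rw [hcard] at this
        exact Nat.le_zero.1 this
      rw [h0]
      omega
  · -- prefix contains all of V and an initial part of the path
    set t := i - n with ht
    have ht1 : 1 ≤ t := by omega
    have htk : t ≤ k - 1 := by omega
    have htk' : t - 1 < k := by omega
    set a : V ⊕ Fin k := Sum.inr ⟨t - 1, htk'⟩ with ha
    set b : V ⊕ Fin k := Sum.inl y with hb
    have hab : a ≠ b := by simp [ha, hb]
    have hbound : cutRank (adjMat G) (Finset.univ.filter fun w : V ⊕ Fin k =>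
        ((e'.symm w : Fin (Fintype.card (V ⊕ Fin k))) : ℕ) < i) ≤ 2 := by
      refine cutRank_le_two _ _ a b hab ?_
      intro w hw j hj hwa hwb
      rw [Finset.mem_filter] at hw hj
      cases j with
      | inl v =>
        exfalso
        refine hj ⟨Finset.mem_univ _, ?_⟩
        rw [hsl v]
        have := (e.symm v).isLt
        omega
      | inr s =>
        have hs : ¬ (n + (s : ℕ) < i) := fun hc' => hj ⟨Finset.mem_univ _, by rw [hsr s]; exact hc'⟩
        have hs' : t ≤ (s : ℕ) := by omega
        cases w with
        | inl u =>
          have hadj : ¬ G.Adj (Sum.inl u) (Sum.inr s) := by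
            rw [h3]
            rintro (⟨-, h0⟩ | ⟨hy', -⟩)
            · omega
            · exact hwb (by rw [hy'])
          simp [adjMat, hadj]
        | inr j' =>
          have hj' : (j' : ℕ) < t := by
            have := hw.2
            rw [hsr j'] at this
            omega
          have hadj : ¬ G.Adj (Sum.inr j') (Sum.inr s) := by
            rw [h2]
            rintro (h0 | h0)
            · refine hwa ?_
              have : (j' : ℕ) = t - 1 := by omega
              rw [ha]
              congr 1
              exact Fin.ext this
            · omega
          simp [adjMat, hadj]
    refine le_trans hbound ?_
    omega
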